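/- Let C ⊆ R^p be a nonempty closed convex cone with polar C*. Then w(C ∩ S^{p−1})² + w(C* ∩ S^{p−1})² ≤ p, where w denotes Gaussian width. -/

import Mathlib

open MeasureTheory ProbabilityTheory Real

/-- The standard Gaussian measure on `ℝ^p`. -/
noncomputable def stdGaussian (p : ℕ) : Measure (EuclideanSpace ℝ (Fin p)) :=
  (Measure.pi fun _ : Fin p => gaussianReal 0 1).map
    ⇑(EuclideanSpace.equiv (Fin p) ℝ).symm

/-- The Gaussian width `w(S) = E[sup_{z ∈ S} ⟨g, z⟩]` of a set `S ⊆ ℝ^p`. -/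
noncomputable def gaussianWidth {p : ℕ} (S : Set (EuclideanSpace ℝ (Fin p))) : ℝ :=
  ∫ g, sSup ((fun z => (inner ℝ g z : ℝ)) '' S) ∂(stdGaussian p)

/-- The polar cone `C* = {x : ⟨x, z⟩ ≤ 0 for all z ∈ C}`. -/
def polarCone {p : ℕ} (C : Set (EuclideanSpace ℝ (Fin p))) :
    Set (EuclideanSpace ℝ (Fin p)) :=
  {x | ∀ z ∈ C, (inner ℝ x z : ℝ) ≤ 0}


open scoped ENNReal NNReal

section Aux

lemma aux_exp_eq (x : ℝ) : rexp (-x^2/2) = rexp (-(1/2) * x^2) := by ring_nf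

lemma aux_integrable_exp : Integrable fun x : ℝ => rexp (-x^2/2) := by
  simpa only [← aux_exp_eq] using integrable_exp_neg_mul_sq (by norm_num : (0:ℝ) < 1/2)

lemma aux_integrable_id_exp : Integrable fun x : ℝ => x * rexp (-x^2/2) := by
  have := integrable_mul_exp_neg_mul_sq (by norm_num : (0:ℝ) < 1/2)
  refine this.congr ?_
  filter_upwards with x using by rw [← aux_exp_eq]

lemma aux_integrable_sq_exp : Integrable fun x : ℝ => x^2 * rexp (-x^2/2) := by
  have := integrable_rpow_mul_exp_neg_mul_sq (by norm_num : (0:ℝ) < 1/2)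
    (by norm_num : (-1:ℝ) < 2)
  refine this.congr ?_
  filter_upwards with x
  rw [← aux_exp_eq]
  norm_num [Real.rpow_two]

lemma aux_integral_exp : ∫ x : ℝ, rexp (-x^2/2) = √(2*π) := by
  have := integral_gaussian (1/2)
  simp only [← aux_exp_eq] at this
  rw [this]
  norm_num [mul_comm]

lemma aux_integral_id_exp : ∫ x : ℝ, x * rexp (-x^2/2) = 0 := by
  have hderiv : ∀ x : ℝ, HasDerivAt (fun y : ℝ => -rexp (-y^2/2)) (x * rexp (-x^2/2)) x := by
    intro x
    have h1 : HasDerivAt (fun y : ℝ => -y^2/2) (-x) x := by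
      have := ((hasDerivAt_pow 2 x).neg).div_const 2
      refine this.congr_deriv ?_
      norm_num
      ring
    have := (h1.exp).neg
    refine this.congr_deriv ?_
    ring
  exact integral_eq_zero_of_hasDerivAt_of_integrable hderiv aux_integrable_id_exp
    aux_integrable_exp.neg

lemma aux_integral_sq_exp : ∫ x : ℝ, x^2 * rexp (-x^2/2) = √(2*π) := by
  have hderiv : ∀ x : ℝ, HasDerivAt (fun y : ℝ => -(y * rexp (-y^2/2)))
      (x^2 * rexp (-x^2/2) - rexp (-x^2/2)) x := by
    intro x
    have h1 : HasDerivAt (fun y : ℝ => -y^2/2) (-x) x := by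
      have := ((hasDerivAt_pow 2 x).neg).div_const 2
      refine this.congr_deriv ?_
      norm_num
      ring
    have h2 := ((hasDerivAt_id x).mul h1.exp).neg
    refine h2.congr_deriv ?_
    simp [id]
    ring
  have h0 := integral_eq_zero_of_hasDerivAt_of_integrable hderiv
    (aux_integrable_sq_exp.sub aux_integrable_exp) aux_integrable_id_exp.neg
  rw [integral_sub aux_integrable_sq_exp aux_integrable_exp, aux_integral_exp] at h0
  linarith


lemma aux_pdf_eq (x : ℝ) : gaussianPDFReal 0 1 x = (√(2*π))⁻¹ * rexp (-x^2/2) := by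
  simp [gaussianPDFReal, NNReal.coe_one]

lemma aux_integral_gaussianReal (f : ℝ → ℝ) :
    ∫ x, f x ∂(gaussianReal 0 1) = ∫ x, gaussianPDFReal 0 1 x * f x := by
  rw [gaussianReal_of_var_ne_zero _ one_ne_zero]
  have hmeas : Measurable fun x => (gaussianPDFReal 0 1 x).toNNReal :=
    (measurable_gaussianPDFReal 0 1).real_toNNReal
  have hd : (volume.withDensity (gaussianPDF 0 1)) =
      volume.withDensity fun x => ((gaussianPDFReal 0 1 x).toNNReal : ℝ≥0∞) := rfl
  rw [hd, integral_withDensity_eq_integral_smul hmeas]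
  congr 1
  funext x
  rw [NNReal.smul_def, Real.coe_toNNReal _ (gaussianPDFReal_nonneg 0 1 x), smul_eq_mul]

lemma aux_integrable_gaussianReal (f : ℝ → ℝ)
    (hf : Integrable fun x => gaussianPDFReal 0 1 x * f x) :
    Integrable f (gaussianReal 0 1) := by
  rw [gaussianReal_of_var_ne_zero _ one_ne_zero]
  have hmeas : Measurable fun x => (gaussianPDFReal 0 1 x).toNNReal :=
    (measurable_gaussianPDFReal 0 1).real_toNNReal
  have hd : (volume.withDensity (gaussianPDF 0 1)) =
      volume.withDensity fun x => ((gaussianPDFReal 0 1 x).toNNReal : ℝ≥0∞) := rfl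
  rw [hd, integrable_withDensity_iff_integrable_smul hmeas]
  refine hf.congr ?_
  filter_upwards with x
  rw [NNReal.smul_def, Real.coe_toNNReal _ (gaussianPDFReal_nonneg 0 1 x), smul_eq_mul]

lemma sqrt_two_pi_pos : (0:ℝ) < √(2*π) := Real.sqrt_pos.2 (by positivity)

lemma aux_integral_id_gaussianReal : ∫ x, x ∂(gaussianReal 0 1) = 0 := by
  rw [aux_integral_gaussianReal]
  simp only [aux_pdf_eq]
  have : ∀ x : ℝ, (√(2*π))⁻¹ * rexp (-x^2/2) * x = (√(2*π))⁻¹ * (x * rexp (-x^2/2)) := by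
    intro x; ring
  simp only [this]
  rw [integral_const_mul, aux_integral_id_exp, mul_zero]

lemma aux_integral_sq_gaussianReal : ∫ x, x^2 ∂(gaussianReal 0 1) = 1 := by
  rw [aux_integral_gaussianReal]
  simp only [aux_pdf_eq]
  have : ∀ x : ℝ, (√(2*π))⁻¹ * rexp (-x^2/2) * x^2 = (√(2*π))⁻¹ * (x^2 * rexp (-x^2/2)) := by
    intro x; ring
  simp only [this]
  rw [integral_const_mul, aux_integral_sq_exp, inv_mul_cancel₀ sqrt_two_pi_pos.ne']

lemma aux_integrable_id_gaussianReal : Integrable (fun x => x) (gaussianReal 0 1) := by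
  refine aux_integrable_gaussianReal _ ?_
  simp only [aux_pdf_eq]
  have : ∀ x : ℝ, (√(2*π))⁻¹ * rexp (-x^2/2) * x = (√(2*π))⁻¹ * (x * rexp (-x^2/2)) := by
    intro x; ring
  simp only [this]
  exact aux_integrable_id_exp.const_mul _

lemma aux_integrable_sq_gaussianReal : Integrable (fun x => x^2) (gaussianReal 0 1) := by
  refine aux_integrable_gaussianReal _ ?_
  simp only [aux_pdf_eq]
  have : ∀ x : ℝ, (√(2*π))⁻¹ * rexp (-x^2/2) * x^2 = (√(2*π))⁻¹ * (x^2 * rexp (-x^2/2)) := by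
    intro x; ring
  simp only [this]
  exact aux_integrable_sq_exp.const_mul _

lemma aux_map_eval_pi {p : ℕ} (i : Fin p) :
    (Measure.pi fun _ : Fin p => gaussianReal 0 1).map (Function.eval i) = gaussianReal 0 1 := by
  ext s hs
  rw [Measure.map_apply (measurable_pi_apply i) hs, Set.eval_preimage, Measure.pi_pi]
  have : ∀ j : Fin p, (gaussianReal 0 1) (Function.update (fun _ : Fin p => Set.univ) i s j)
      = Function.update (fun _ : Fin p => (1 : ℝ≥0∞)) i (gaussianReal 0 1 s) j := by
    intro j
    rcases eq_or_ne j i with rfl | hj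
    · simp
    · simp [Function.update_of_ne hj]
  rw [Finset.prod_congr rfl fun j _ => this j, Finset.prod_update_of_mem (Finset.mem_univ i)]
  simp

lemma aux_integral_eval {p : ℕ} (i : Fin p) (f : ℝ → ℝ) (hf : Continuous f) :
    ∫ x, f (x i) ∂(Measure.pi fun _ : Fin p => gaussianReal 0 1)
      = ∫ t, f t ∂(gaussianReal 0 1) := by
  have h1 : AEStronglyMeasurable f
      ((Measure.pi fun _ : Fin p => gaussianReal 0 1).map (Function.eval i)) :=
    hf.aestronglyMeasurable
  have h2 := integral_map (μ := Measure.pi fun _ : Fin p => gaussianReal 0 1)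
    (φ := Function.eval i) (measurable_pi_apply i).aemeasurable h1
  rw [aux_map_eval_pi i] at h2
  exact h2.symm

lemma aux_integrable_eval {p : ℕ} (i : Fin p) (f : ℝ → ℝ) (hf : Continuous f)
    (hi : Integrable f (gaussianReal 0 1)) :
    Integrable (fun x => f (x i)) (Measure.pi fun _ : Fin p => gaussianReal 0 1) := by
  have h1 : AEStronglyMeasurable f
      ((Measure.pi fun _ : Fin p => gaussianReal 0 1).map (Function.eval i)) :=
    hf.aestronglyMeasurable
  have := (integrable_map_measure h1 (measurable_pi_apply i).aemeasurable).1
    (by rwa [aux_map_eval_pi i])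
  exact this

instance stdGaussian_prob (p : ℕ) : IsProbabilityMeasure (stdGaussian p) :=
  Measure.isProbabilityMeasure_map
    ((EuclideanSpace.equiv (Fin p) ℝ).symm.continuous.measurable.aemeasurable)

lemma aux_integral_stdGaussian {p : ℕ} (f : EuclideanSpace ℝ (Fin p) → ℝ)
    (hf : AEStronglyMeasurable f (stdGaussian p)) :
    ∫ g, f g ∂(stdGaussian p)
      = ∫ x, f ((EuclideanSpace.equiv (Fin p) ℝ).symm x)
          ∂(Measure.pi fun _ : Fin p => gaussianReal 0 1) :=
  integral_map ((EuclideanSpace.equiv (Fin p) ℝ).symm.continuous.measurable.aemeasurable) hf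

lemma aux_integrable_stdGaussian {p : ℕ} (f : EuclideanSpace ℝ (Fin p) → ℝ)
    (hf : AEStronglyMeasurable f (stdGaussian p))
    (hi : Integrable (fun x => f ((EuclideanSpace.equiv (Fin p) ℝ).symm x))
      (Measure.pi fun _ : Fin p => gaussianReal 0 1)) :
    Integrable f (stdGaussian p) :=
  (integrable_map_measure hf
    ((EuclideanSpace.equiv (Fin p) ℝ).symm.continuous.measurable.aemeasurable)).2 hi

lemma aux_norm_sq {p : ℕ} (y : EuclideanSpace ℝ (Fin p)) : ‖y‖^2 = ∑ i, (y i)^2 := by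
  rw [EuclideanSpace.norm_eq, Real.sq_sqrt (by positivity)]
  simp [Real.norm_eq_abs, sq_abs]

lemma aux_integrable_norm_sq {p : ℕ} :
    Integrable (fun g : EuclideanSpace ℝ (Fin p) => ‖g‖^2) (stdGaussian p) := by
  refine aux_integrable_stdGaussian _ ((continuous_norm.pow 2).aestronglyMeasurable) ?_
  have : (fun x : Fin p → ℝ => ‖(EuclideanSpace.equiv (Fin p) ℝ).symm x‖^2)
      = fun x : Fin p → ℝ => ∑ i, (x i)^2 := by
    funext x
    rw [aux_norm_sq]
    rfl
  rw [this]
  exact integrable_finset_sum _ fun i _ =>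
    aux_integrable_eval i (fun t => t^2) (by continuity) aux_integrable_sq_gaussianReal

lemma aux_integral_norm_sq {p : ℕ} :
    ∫ g, ‖g‖^2 ∂(stdGaussian p) = p := by
  rw [aux_integral_stdGaussian (fun g => ‖g‖^2) ((continuous_norm.pow 2).aestronglyMeasurable)]
  have : (fun x : Fin p → ℝ => ‖(EuclideanSpace.equiv (Fin p) ℝ).symm x‖^2)
      = fun x : Fin p → ℝ => ∑ i, (x i)^2 := by
    funext x
    rw [aux_norm_sq]
    rfl
  rw [this, integral_finset_sum _ fun i _ =>
    aux_integrable_eval i (fun t => t^2) (by continuity) aux_integrable_sq_gaussianReal]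
  simp only [aux_integral_eval _ (fun t => t^2) (by continuity), aux_integral_sq_gaussianReal]
  simp

lemma aux_integral_inner {p : ℕ} (z : EuclideanSpace ℝ (Fin p)) :
    ∫ g, (inner ℝ g z : ℝ) ∂(stdGaussian p) = 0 := by
  have hcont : Continuous fun g : EuclideanSpace ℝ (Fin p) => (inner ℝ g z : ℝ) := by
    exact Continuous.inner continuous_id continuous_const
  rw [aux_integral_stdGaussian _ hcont.aestronglyMeasurable]
  have : (fun x : Fin p → ℝ => (inner ℝ ((EuclideanSpace.equiv (Fin p) ℝ).symm x) z : ℝ))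
      = fun x : Fin p → ℝ => ∑ i, x i * z i := by
    funext x
    rw [PiLp.inner_apply]
    simp [mul_comm]
  rw [this, integral_finset_sum _ fun i _ => ?_]
  · have : ∀ i : Fin p, ∫ x : Fin p → ℝ, x i * z i ∂(Measure.pi fun _ : Fin p => gaussianReal 0 1)
        = 0 := by
      intro i
      rw [aux_integral_eval i (fun t => t * z i) (by continuity)]
      rw [integral_mul_const, aux_integral_id_gaussianReal, zero_mul]
    simp only [this, Finset.sum_const_zero]
  · exact aux_integrable_eval i (fun t => t * z i) (by continuity)
      (aux_integrable_id_gaussianReal.mul_const _)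

lemma aux_proj {p : ℕ} (C : Set (EuclideanSpace ℝ (Fin p)))
    (hne : C.Nonempty) (hconv : Convex ℝ C) (hclosed : IsClosed C)
    (hcone : ∀ (t : ℝ), 0 ≤ t → ∀ x ∈ C, t • x ∈ C) (g : EuclideanSpace ℝ (Fin p)) :
    ∃ v, v ∈ C ∧ (inner ℝ (g - v) v : ℝ) = 0 ∧ (∀ z ∈ C, (inner ℝ (g - v) z : ℝ) ≤ 0) ∧
      Metric.infDist g C = ‖g - v‖ ∧ Metric.infDist g (polarCone C) = ‖v‖ := by
  have h0C : (0 : EuclideanSpace ℝ (Fin p)) ∈ C := by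
    obtain ⟨x, hx⟩ := hne
    simpa using hcone 0 le_rfl x hx
  obtain ⟨v, hvC, hv⟩ := exists_norm_eq_iInf_of_complete_convex hne hclosed.isComplete hconv g
  have hchar := (norm_eq_iInf_iff_real_inner_le_zero hconv hvC).1 hv
  -- orthogonality
  have h2v : (2:ℝ) • v ∈ C := hcone 2 (by norm_num) v hvC
  have ha : (inner ℝ (g - v) v : ℝ) ≤ 0 := by
    have := hchar _ h2v
    have h2 : (2:ℝ) • v - v = v := by
      rw [two_smul]; abel
    rwa [h2] at this
  have hb : (0:ℝ) ≤ inner ℝ (g - v) v := by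
    have := hchar _ h0C
    rw [zero_sub, inner_neg_right] at this
    linarith
  have horth : (inner ℝ (g - v) v : ℝ) = 0 := le_antisymm ha hb
  have hpolar : ∀ z ∈ C, (inner ℝ (g - v) z : ℝ) ≤ 0 := by
    intro z hz
    have h1 := hchar z hz
    have : (inner ℝ (g - v) z : ℝ) = inner ℝ (g - v) (z - v) + inner ℝ (g - v) v := by
      rw [← inner_add_right]
      congr 1
      abel
    rw [this, horth, add_zero]
    exact h1
  have huC : g - v ∈ polarCone C := hpolar
  have h0P : (0 : EuclideanSpace ℝ (Fin p)) ∈ polarCone C := by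
    intro z hz
    simp
  refine ⟨v, hvC, horth, hpolar, ?_, ?_⟩
  · rw [Metric.infDist_eq_iInf, hv]
    simp only [dist_eq_norm]
  · refine le_antisymm ?_ ?_
    · have := Metric.infDist_le_dist_of_mem (x := g) huC
      rwa [dist_eq_norm, sub_sub_cancel] at this
    · rw [Metric.infDist_eq_iInf]
      have : Nonempty (polarCone C) := ⟨⟨0, h0P⟩⟩
      refine le_ciInf fun w => ?_
      rw [dist_eq_norm]
      have hw : (inner ℝ v (w:EuclideanSpace ℝ (Fin p)) : ℝ) ≤ 0 := by
        have := w.2 v hvC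
        rwa [real_inner_comm] at this
      have hexp : ‖g - (w:EuclideanSpace ℝ (Fin p))‖^2
          = ‖v‖^2 + 2 * inner ℝ v ((g - v) - w) + ‖(g - v) - w‖^2 := by
        have hgw : g - (w:EuclideanSpace ℝ (Fin p)) = v + ((g - v) - w) := by abel
        rw [hgw, norm_add_sq_real]
      have hvu : (inner ℝ v (g - v) : ℝ) = 0 := by
        rwa [real_inner_comm] at horth
      have h5 : (inner ℝ v ((g - v) - (w:EuclideanSpace ℝ (Fin p))) : ℝ) = - inner ℝ v (w:EuclideanSpace ℝ (Fin p)) := by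
        rw [inner_sub_right, hvu, zero_sub]
      have : ‖v‖^2 ≤ ‖g - (w:EuclideanSpace ℝ (Fin p))‖^2 := by
        rw [hexp, h5]
        nlinarith [sq_nonneg ‖(g - v) - (w:EuclideanSpace ℝ (Fin p))‖]
      nlinarith [norm_nonneg v, norm_nonneg (g - (w:EuclideanSpace ℝ (Fin p)))]

lemma aux_memℒp_norm {p : ℕ} :
    MemLp (fun g : EuclideanSpace ℝ (Fin p) => ‖g‖) 2 (stdGaussian p) :=
  (memLp_two_iff_integrable_sq continuous_norm.aestronglyMeasurable).2 aux_integrable_norm_sq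

lemma aux_integrable_norm {p : ℕ} :
    Integrable (fun g : EuclideanSpace ℝ (Fin p) => ‖g‖) (stdGaussian p) :=
  aux_memℒp_norm.integrable one_le_two

/-- domination principle -/
lemma aux_integrable_dom {p : ℕ} (f : EuclideanSpace ℝ (Fin p) → ℝ)
    (hf : AEStronglyMeasurable f (stdGaussian p)) (hdom : ∀ g, |f g| ≤ ‖g‖) :
    Integrable f (stdGaussian p) :=
  aux_integrable_norm.mono hf (by
    filter_upwards with g
    rw [Real.norm_eq_abs, Real.norm_eq_abs, abs_of_nonneg (norm_nonneg g)]
    exact hdom g)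

lemma aux_memℒp_dom {p : ℕ} (f : EuclideanSpace ℝ (Fin p) → ℝ)
    (hf : AEStronglyMeasurable f (stdGaussian p)) (hdom : ∀ g, |f g| ≤ ‖g‖) :
    MemLp f 2 (stdGaussian p) :=
  MemLp.of_le aux_memℒp_norm hf (by
    filter_upwards with g
    rw [Real.norm_eq_abs, Real.norm_eq_abs, abs_of_nonneg (norm_nonneg g)]
    exact hdom g)

/-- Jensen / Cauchy-Schwarz -/
lemma aux_sq_integral_le {p : ℕ} (D : EuclideanSpace ℝ (Fin p) → ℝ)
    (hD : MemLp D 2 (stdGaussian p)) :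
    (∫ g, D g ∂(stdGaussian p))^2 ≤ ∫ g, (D g)^2 ∂(stdGaussian p) := by
  have h1 := variance_nonneg D (stdGaussian p)
  rw [variance_eq_sub hD] at h1
  have : ∫ x, (D ^ 2) x ∂(stdGaussian p) = ∫ g, (D g)^2 ∂(stdGaussian p) := rfl
  rw [this] at h1
  linarith

/-- Main per-set estimate. -/
lemma aux_width_le {p : ℕ} (S : Set (EuclideanSpace ℝ (Fin p)))
    (hS : S ⊆ Metric.sphere 0 1)
    (D : EuclideanSpace ℝ (Fin p) → ℝ) (hDc : Continuous D)
    (hD0 : ∀ g, 0 ≤ D g) (hDle : ∀ g, D g ≤ ‖g‖)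
    (hb : ∀ g, ∀ z ∈ S, (inner ℝ g z : ℝ) ≤ D g) :
    0 ≤ gaussianWidth S ∧ gaussianWidth S ≤ ∫ g, D g ∂(stdGaussian p) := by
  have hDdom : ∀ g : EuclideanSpace ℝ (Fin p), |D g| ≤ ‖g‖ := fun g => by
    rw [abs_of_nonneg (hD0 g)]; exact hDle g
  have hDint : Integrable D (stdGaussian p) :=
    aux_integrable_dom D hDc.aestronglyMeasurable hDdom
  set f : EuclideanSpace ℝ (Fin p) → ℝ :=
    fun g => sSup ((fun z => (inner ℝ g z : ℝ)) '' S) with hf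
  rcases S.eq_empty_or_nonempty with rfl | ⟨z₀, hz₀⟩
  · have : gaussianWidth (∅ : Set (EuclideanSpace ℝ (Fin p))) = 0 := by
      simp [gaussianWidth, Real.sSup_empty]
    rw [this]
    exact ⟨le_rfl, integral_nonneg hD0⟩
  · have hz₀n : ‖z₀‖ = 1 := by
      have := hS hz₀
      rwa [mem_sphere_zero_iff_norm] at this
    have hfle : ∀ g, f g ≤ D g := fun g =>
      Real.sSup_le (by rintro x ⟨z, hz, rfl⟩; exact hb g z hz) (hD0 g)
    have hbdd : ∀ g : EuclideanSpace ℝ (Fin p),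
        BddAbove ((fun z => (inner ℝ g z : ℝ)) '' S) := by
      intro g
      refine ⟨‖g‖, ?_⟩
      rintro x ⟨z, hz, rfl⟩
      calc (inner ℝ g z : ℝ) ≤ ‖g‖ * ‖z‖ := real_inner_le_norm g z
      _ = ‖g‖ := by
        have hzn : ‖z‖ = 1 := by have := hS hz; rwa [mem_sphere_zero_iff_norm] at this
        rw [hzn, mul_one]
    have hfge : ∀ g, (inner ℝ g z₀ : ℝ) ≤ f g := fun g =>
      le_csSup (hbdd g) ⟨z₀, hz₀, rfl⟩
    have hlip : LipschitzWith 1 f := by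
      refine LipschitzWith.of_dist_le_mul fun g₁ g₂ => ?_
      rw [NNReal.coe_one, one_mul, dist_eq_norm, Real.norm_eq_abs, abs_sub_le_iff]
      constructor
      · rw [sub_le_iff_le_add]
        refine csSup_le (Set.Nonempty.image _ ⟨z₀, hz₀⟩) ?_
        rintro x ⟨z, hz, rfl⟩
        simp only
        have hzn : ‖z‖ = 1 := by have := hS hz; rwa [mem_sphere_zero_iff_norm] at this
        have : (inner ℝ g₁ z : ℝ) = inner ℝ g₂ z + inner ℝ (g₁ - g₂) z := by
          rw [← inner_add_left]; congr 1; abel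
        rw [this, add_comm (inner ℝ g₂ z : ℝ)]
        gcongr
        · calc (inner ℝ (g₁ - g₂) z : ℝ) ≤ ‖g₁ - g₂‖ * ‖z‖ := real_inner_le_norm _ _
          _ = ‖g₁ - g₂‖ := by rw [hzn, mul_one]
          _ = dist g₁ g₂ := (dist_eq_norm _ _).symm
        · exact le_csSup (hbdd g₂) ⟨z, hz, rfl⟩
      · rw [sub_le_iff_le_add]
        refine csSup_le (Set.Nonempty.image _ ⟨z₀, hz₀⟩) ?_
        rintro x ⟨z, hz, rfl⟩
        simp only
        have hzn : ‖z‖ = 1 := by have := hS hz; rwa [mem_sphere_zero_iff_norm] at this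
        have : (inner ℝ g₂ z : ℝ) = inner ℝ g₁ z + inner ℝ (g₂ - g₁) z := by
          rw [← inner_add_left]; congr 1; abel
        rw [this, add_comm (inner ℝ g₁ z : ℝ)]
        gcongr
        · calc (inner ℝ (g₂ - g₁) z : ℝ) ≤ ‖g₂ - g₁‖ * ‖z‖ := real_inner_le_norm _ _
          _ = ‖g₂ - g₁‖ := by rw [hzn, mul_one]
          _ = dist g₁ g₂ := by rw [dist_eq_norm, norm_sub_rev]
        · exact le_csSup (hbdd g₁) ⟨z, hz, rfl⟩
    have hfmeas : AEStronglyMeasurable f (stdGaussian p) :=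
      hlip.continuous.aestronglyMeasurable
    have hfdom : ∀ g : EuclideanSpace ℝ (Fin p), |f g| ≤ ‖g‖ := by
      intro g
      rw [abs_le]
      constructor
      · calc -‖g‖ = -(‖g‖ * ‖z₀‖) := by rw [hz₀n, mul_one]
        _ ≤ inner ℝ g z₀ := neg_le_of_abs_le (abs_real_inner_le_norm g z₀)
        _ ≤ f g := hfge g
      · exact (hfle g).trans (hDle g)
    have hfint : Integrable f (stdGaussian p) := aux_integrable_dom f hfmeas hfdom
    have hinner_int : Integrable (fun g => (inner ℝ g z₀ : ℝ)) (stdGaussian p) := by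
      refine aux_integrable_dom _ (Continuous.aestronglyMeasurable (by
        exact Continuous.inner continuous_id continuous_const)) fun g => ?_
      calc |(inner ℝ g z₀ : ℝ)| ≤ ‖g‖ * ‖z₀‖ := abs_real_inner_le_norm g z₀
      _ = ‖g‖ := by rw [hz₀n, mul_one]
    constructor
    · calc (0:ℝ) = ∫ g, (inner ℝ g z₀ : ℝ) ∂(stdGaussian p) := (aux_integral_inner z₀).symm
      _ ≤ ∫ g, f g ∂(stdGaussian p) := integral_mono hinner_int hfint hfge
    · exact integral_mono hfint hDint hfle

end Aux

/-- For a nonempty closed convex cone `C ⊆ ℝ^p` with polar `C*`,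
`w(C ∩ S^{p-1})² + w(C* ∩ S^{p-1})² ≤ p`. -/
theorem gaussianWidth_sq_add_polar_sq_le {p : ℕ}
    (C : Set (EuclideanSpace ℝ (Fin p)))
    (hne : C.Nonempty) (hconv : Convex ℝ C) (hclosed : IsClosed C)
    (hcone : ∀ (t : ℝ), 0 ≤ t → ∀ x ∈ C, t • x ∈ C) :
    gaussianWidth (C ∩ Metric.sphere 0 1) ^ 2 +
      gaussianWidth (polarCone C ∩ Metric.sphere 0 1) ^ 2 ≤ p := by
  have h0C : (0 : EuclideanSpace ℝ (Fin p)) ∈ C := by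
    obtain ⟨x, hx⟩ := hne
    simpa using hcone 0 le_rfl x hx
  have h0P : (0 : EuclideanSpace ℝ (Fin p)) ∈ polarCone C := by
    intro z hz; simp
  set D1 : EuclideanSpace ℝ (Fin p) → ℝ := fun g => Metric.infDist g (polarCone C) with hD1def
  set D2 : EuclideanSpace ℝ (Fin p) → ℝ := fun g => Metric.infDist g C with hD2def
  have hproj := aux_proj C hne hconv hclosed hcone
  have hD1c : Continuous D1 := Metric.continuous_infDist_pt _
  have hD2c : Continuous D2 := Metric.continuous_infDist_pt _
  have hD10 : ∀ g, 0 ≤ D1 g := fun g => Metric.infDist_nonneg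
  have hD20 : ∀ g, 0 ≤ D2 g := fun g => Metric.infDist_nonneg
  have hD1le : ∀ g, D1 g ≤ ‖g‖ := fun g => by
    have := Metric.infDist_le_dist_of_mem (x := g) h0P
    rwa [dist_zero_right] at this
  have hD2le : ∀ g, D2 g ≤ ‖g‖ := fun g => by
    have := Metric.infDist_le_dist_of_mem (x := g) h0C
    rwa [dist_zero_right] at this
  have hb1 : ∀ g, ∀ z ∈ C ∩ Metric.sphere 0 1, (inner ℝ g z : ℝ) ≤ D1 g := by
    intro g z hz
    obtain ⟨v, hvC, horth, hpolar, hd2, hd1⟩ := hproj g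
    have hzn : ‖z‖ = 1 := by have := hz.2; rwa [mem_sphere_zero_iff_norm] at this
    have hsplit : (inner ℝ g z : ℝ) = inner ℝ v z + inner ℝ (g - v) z := by
      rw [← inner_add_left]
      congr 1
      abel
    rw [hsplit, hD1def]
    simp only
    rw [hd1]
    have h1 : (inner ℝ v z : ℝ) ≤ ‖v‖ := by
      calc (inner ℝ v z : ℝ) ≤ ‖v‖ * ‖z‖ := real_inner_le_norm v z
      _ = ‖v‖ := by rw [hzn, mul_one]
    have h2 : (inner ℝ (g - v) z : ℝ) ≤ 0 := hpolar z hz.1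
    linarith
  have hb2 : ∀ g, ∀ z ∈ polarCone C ∩ Metric.sphere 0 1, (inner ℝ g z : ℝ) ≤ D2 g := by
    intro g z hz
    obtain ⟨v, hvC, horth, hpolar, hd2, hd1⟩ := hproj g
    have hzn : ‖z‖ = 1 := by have := hz.2; rwa [mem_sphere_zero_iff_norm] at this
    have hsplit : (inner ℝ g z : ℝ) = inner ℝ v z + inner ℝ (g - v) z := by
      rw [← inner_add_left]
      congr 1
      abel
    rw [hsplit, hD2def]
    simp only
    rw [hd2]
    have h1 : (inner ℝ v z : ℝ) ≤ 0 := by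
      have := hz.1 v hvC
      rwa [real_inner_comm] at this
    have h2 : (inner ℝ (g - v) z : ℝ) ≤ ‖g - v‖ := by
      calc (inner ℝ (g - v) z : ℝ) ≤ ‖g - v‖ * ‖z‖ := real_inner_le_norm _ _
      _ = ‖g - v‖ := by rw [hzn, mul_one]
    linarith
  have hpt : ∀ g, D1 g ^ 2 + D2 g ^ 2 = ‖g‖ ^ 2 := by
    intro g
    obtain ⟨v, hvC, horth, hpolar, hd2, hd1⟩ := hproj g
    simp only [hD1def, hD2def]
    rw [hd1, hd2]
    have hg : g = v + (g - v) := by abel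
    have : ‖g‖ ^ 2 = ‖v‖ ^ 2 + 2 * inner ℝ v (g - v) + ‖g - v‖ ^ 2 := by
      conv_lhs => rw [hg]
      rw [norm_add_sq_real]
    have hvo : (inner ℝ v (g - v) : ℝ) = 0 := by rwa [real_inner_comm] at horth
    rw [this, hvo]
    ring
  obtain ⟨h1n, h1le⟩ := aux_width_le (C ∩ Metric.sphere 0 1) Set.inter_subset_right
    D1 hD1c hD10 hD1le hb1
  obtain ⟨h2n, h2le⟩ := aux_width_le (polarCone C ∩ Metric.sphere 0 1) Set.inter_subset_right
    D2 hD2c hD20 hD2le hb2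
  have hM1 : MemLp D1 2 (stdGaussian p) :=
    aux_memℒp_dom D1 hD1c.aestronglyMeasurable fun g => by
      rw [abs_of_nonneg (hD10 g)]; exact hD1le g
  have hM2 : MemLp D2 2 (stdGaussian p) :=
    aux_memℒp_dom D2 hD2c.aestronglyMeasurable fun g => by
      rw [abs_of_nonneg (hD20 g)]; exact hD2le g
  have hsq1 := aux_sq_integral_le D1 hM1
  have hsq2 := aux_sq_integral_le D2 hM2
  have hint1 : Integrable (fun g => D1 g ^ 2) (stdGaussian p) :=
    (memLp_two_iff_integrable_sq hD1c.aestronglyMeasurable).1 hM1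
  have hint2 : Integrable (fun g => D2 g ^ 2) (stdGaussian p) :=
    (memLp_two_iff_integrable_sq hD2c.aestronglyMeasurable).1 hM2
  have hsum : (∫ g, D1 g ^ 2 ∂(stdGaussian p)) + (∫ g, D2 g ^ 2 ∂(stdGaussian p)) = p := by
    rw [← integral_add hint1 hint2]
    have : (fun g => D1 g ^ 2 + D2 g ^ 2)
        = fun g : EuclideanSpace ℝ (Fin p) => ‖g‖ ^ 2 := by
      funext g; exact hpt g
    rw [this, aux_integral_norm_sq]
  have hw1 : gaussianWidth (C ∩ Metric.sphere 0 1) ^ 2 ≤ ∫ g, D1 g ^ 2 ∂(stdGaussian p) := by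
    calc gaussianWidth (C ∩ Metric.sphere 0 1) ^ 2
        ≤ (∫ g, D1 g ∂(stdGaussian p)) ^ 2 := by
          apply pow_le_pow_left₀ h1n h1le
      _ ≤ _ := hsq1
  have hw2 : gaussianWidth (polarCone C ∩ Metric.sphere 0 1) ^ 2
      ≤ ∫ g, D2 g ^ 2 ∂(stdGaussian p) := by
    calc gaussianWidth (polarCone C ∩ Metric.sphere 0 1) ^ 2
        ≤ (∫ g, D2 g ∂(stdGaussian p)) ^ 2 := by
          apply pow_le_pow_left₀ h2n h2le
      _ ≤ _ := hsq2
  linarith
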